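/- For all positive integers n, r, s: Z_{n+r}·W_{n+s} − Z_n·W_{n+r+s} = (−q)^n·u_r·(Z_1·W_s − Z_0·W_{s+1}), where u_r is the r-th (p,q)-Fibonacci number (a Catalan-type identity for two Horadam quaternion sequences). -/
import Mathlib

open Quaternion

-- quaternion recurrence
lemma qrec (p q : ℝ) (w : ℕ → ℝ) (hw : ∀ n, w (n + 2) = p * w (n + 1) + q * w n)
    (W : ℕ → ℍ[ℝ]) (hW : ∀ n, W n = ⟨w n, w (n + 1), w (n + 2), w (n + 3)⟩) :
    ∀ m, W (m + 2) = p • W (m + 1) + q • W m := by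
  intro m
  rw [hW, hW, hW]
  have h0 : w (m + 2) = p * w (m + 1) + q * w m := hw m
  have h1 : w (m + 3) = p * w (m + 2) + q * w (m + 1) := hw (m + 1)
  have h2 : w (m + 4) = p * w (m + 3) + q * w (m + 2) := hw (m + 2)
  have h3 : w (m + 5) = p * w (m + 4) + q * w (m + 3) := hw (m + 3)
  ext <;> simp <;> [exact h0; exact h1; exact h2; exact h3]

-- shift lemma
lemma qshift (p q : ℝ) (u : ℕ → ℝ) (hu : ∀ n, u (n + 2) = p * u (n + 1) + q * u n)
    (hu0 : u 0 = 0) (hu1 : u 1 = 1)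
    (X : ℕ → ℍ[ℝ]) (hX : ∀ m, X (m + 2) = p • X (m + 1) + q • X m) :
    ∀ k m, X (m + k + 1) = u (k + 1) • X (m + 1) + (q * u k) • X m := by
  intro k
  induction k using Nat.twoStepInduction with
  | zero => intro m; simp [hu0, hu1]
  | one =>
      intro m
      have h2 : u 2 = p * u 1 + q * u 0 := hu 0
      show X (m + 2) = _
      rw [hX m, h2, hu0, hu1]
      module
  | more k ih1 ih2 =>
      intro m
      have e : m + (k + 2) + 1 = (m + k + 1) + 2 := by ring
      have e2 : m + k + 1 + 1 = m + (k + 1) + 1 := by ring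
      have hA : u (k + 2 + 1) = p * u (k + 1 + 1) + q * u (k + 1) := hu (k + 1)
      have hB : u (k + 2) = p * u (k + 1) + q * u k := hu k
      rw [e, hX, e2, ih2, ih1, hA, hB]
      module

lemma gkey (p q : ℝ) (s : ℕ)
    (W Z : ℕ → ℍ[ℝ]) (hWr : ∀ m, W (m + 2) = p • W (m + 1) + q • W m)
    (hZr : ∀ m, Z (m + 2) = p • Z (m + 1) + q • Z m) :
    ∀ m, Z (m + 1) * W (m + s) - Z m * W (m + s + 1) =
      (-q) ^ m • (Z 1 * W s - Z 0 * W (s + 1)) := by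
  intro m
  induction m with
  | zero => simp
  | succ m ih =>
      simp only [show m + 1 + s = m + s + 1 from by ring,
        show m + 1 + s + 1 = m + s + 2 from by ring]
      rw [show m + 1 + 1 = m + 2 from rfl, hZr m, hWr (m + s), pow_succ]
      rw [mul_comm ((-q) ^ m) (-q), mul_smul, ← ih]
      rw [add_mul, mul_add, smul_mul_assoc, smul_mul_assoc, mul_smul_comm, mul_smul_comm]
      rw [smul_sub]
      module

theorem stmt9 (p q : ℝ) (w : ℕ → ℝ) (hw : ∀ n, w (n + 2) = p * w (n + 1) + q * w n)
    (W : ℕ → ℍ[ℝ]) (hW : ∀ n, W n = ⟨w n, w (n + 1), w (n + 2), w (n + 3)⟩)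
    (z : ℕ → ℝ) (hz : ∀ n, z (n + 2) = p * z (n + 1) + q * z n)
    (Z : ℕ → ℍ[ℝ]) (hZ : ∀ n, Z n = ⟨z n, z (n + 1), z (n + 2), z (n + 3)⟩)
    (u : ℕ → ℝ) (hu : ∀ n, u (n + 2) = p * u (n + 1) + q * u n)
    (hu0 : u 0 = 0) (hu1 : u 1 = 1)
    (U : ℕ → ℍ[ℝ]) (hU : ∀ n, U n = ⟨u n, u (n + 1), u (n + 2), u (n + 3)⟩)
    (n r s : ℕ) (hn : 1 ≤ n) (hr : 1 ≤ r) (hs : 1 ≤ s) :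
    Z (n + r) * W (n + s) - Z n * W (n + r + s) =
      ((-q) ^ n * u r) • (Z 1 * W s - Z 0 * W (s + 1)) := by
  have hWr := qrec p q w hw W hW
  have hZr := qrec p q z hz Z hZ
  obtain ⟨k, rfl⟩ : ∃ k, r = k + 1 := ⟨r - 1, by omega⟩
  have h1 : Z (n + (k + 1)) = u (k + 1) • Z (n + 1) + (q * u k) • Z n := by
    rw [show n + (k + 1) = n + k + 1 from by ring]
    exact qshift p q u hu hu0 hu1 Z hZr k n
  have h2 : W (n + (k + 1) + s) = u (k + 1) • W (n + s + 1) + (q * u k) • W (n + s) := by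
    rw [show n + (k + 1) + s = (n + s) + k + 1 from by ring]
    exact qshift p q u hu hu0 hu1 W hWr k (n + s)
  rw [h1, h2, add_mul, mul_add, smul_mul_assoc, smul_mul_assoc, mul_smul_comm, mul_smul_comm]
  have hg := gkey p q s W Z hWr hZr n
  calc u (k + 1) • (Z (n + 1) * W (n + s)) + (q * u k) • (Z n * W (n + s)) -
        (u (k + 1) • (Z n * W (n + s + 1)) + (q * u k) • (Z n * W (n + s)))
      = u (k + 1) • (Z (n + 1) * W (n + s) - Z n * W (n + s + 1)) := by module
    _ = u (k + 1) • ((-q) ^ n • (Z 1 * W s - Z 0 * W (s + 1))) := by rw [hg]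
    _ = ((-q) ^ n * u (k + 1)) • (Z 1 * W s - Z 0 * W (s + 1)) := by
        rw [smul_smul, mul_comm]
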